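/- Let m ≥ 2 and let U be the intersection, over all partitions of {1,...,m} into two nonempty parts S₁ ⊔ S₂, of the subspaces V_{S₁}^{<2|S₁|} ⊗ V_{S₂} + V_{S₁} ⊗ V_{S₂}^{<2|S₂|} of the polynomial ring Q[x₁,...,xₘ] (where each xᵢ has degree 4). Then any monomial of degree 4d ≥ 2m lying in U is pure, i.e., of the form xᵢ^d for some i. -/

import Mathlib

open MvPolynomial

open Finset

lemma coeff_mem_span_aux {m : ℕ} (s : Fin m →₀ ℕ) (P : (Fin m →₀ ℕ) → Prop)
    (h : (monomial s (1:ℚ) : MvPolynomial (Fin m) ℚ) ∈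
      Submodule.span ℚ {p : MvPolynomial (Fin m) ℚ | ∃ t, p = monomial t 1 ∧ P t}) :
    P s := by
  by_contra hP
  have hsub : {p : MvPolynomial (Fin m) ℚ | ∃ t, p = monomial t 1 ∧ P t} ⊆
      (LinearMap.ker (lcoeff ℚ s) : Submodule ℚ (MvPolynomial (Fin m) ℚ)) := by
    rintro p ⟨t, rfl, ht⟩
    simp only [SetLike.mem_coe, LinearMap.mem_ker, lcoeff_apply, coeff_monomial]
    rw [if_neg]
    rintro rfl; exact hP ht
  have h2 := Submodule.span_le.mpr hsub h
  simp [LinearMap.mem_ker, lcoeff_apply, coeff_monomial] at h2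

lemma exists_perm_aux {m : ℕ} (a b i j : Fin m) (hab : a ≠ b) (hij : i ≠ j) :
    ∃ e : Equiv.Perm (Fin m), e a = i ∧ e b = j := by
  set f := Equiv.swap a i with hf
  set j' := f j with hj'
  have haj' : a ≠ j' := by
    intro h
    apply hij
    have h2 : f i = f j := by
      rw [hf, Equiv.swap_apply_right, ← hj', ← h]
    exact f.injective h2
  refine ⟨(Equiv.swap b j').trans f, ?_, ?_⟩
  · simp only [Equiv.trans_apply, Equiv.swap_apply_of_ne_of_ne hab haj']
    rw [hf, Equiv.swap_apply_left]
  · simp only [Equiv.trans_apply, Equiv.swap_apply_left]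
    rw [hj', hf, Equiv.swap_apply_self]


/-- In `ℚ[x₁,…,xₘ]` with each `xᵢ` of degree 4, any monomial of degree `4d ≥ 2m`
lying in the intersection, over all partitions `{1,…,m} = S ⊔ Sᶜ` with both parts
nonempty, of the subspaces `V_S^{<2|S|} ⊗ V_{Sᶜ} + V_S ⊗ V_{Sᶜ}^{<2|Sᶜ|}`, is pure,
i.e. of the form `xᵢ^d`. -/
theorem stmt_0 (m d : ℕ) (hm : 2 ≤ m) (hd : 2 * m ≤ 4 * d)
    (s : Fin m →₀ ℕ) (hdeg : ∑ i, s i = d)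
    (hU : ∀ S : Finset (Fin m), S ≠ ∅ → S ≠ Finset.univ →
      (monomial s (1 : ℚ) : MvPolynomial (Fin m) ℚ) ∈
        Submodule.span ℚ {p : MvPolynomial (Fin m) ℚ |
          ∃ t : Fin m →₀ ℕ, p = monomial t (1 : ℚ) ∧
            (4 * ∑ i ∈ S, t i < 2 * S.card ∨ 4 * ∑ i ∈ Sᶜ, t i < 2 * Sᶜ.card)}) :
    ∃ i : Fin m, s = Finsupp.single i d := by
  have hd1 : 1 ≤ d := by omega
  have hcond : ∀ S : Finset (Fin m), S ≠ ∅ → S ≠ Finset.univ →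
      4 * ∑ x ∈ S, s x < 2 * S.card ∨ 4 * ∑ x ∈ Sᶜ, s x < 2 * Sᶜ.card := by
    intro S h1 h2
    exact coeff_mem_span_aux s _ (hU S h1 h2)
  have hex : ∃ i, s i ≠ 0 := by
    by_contra h
    push_neg at h
    simp only [h, Finset.sum_const_zero] at hdeg
    omega
  obtain ⟨i, hi⟩ := hex
  have hkey : ∀ j, j ≠ i → s j = 0 := by
    intro j hj
    by_contra hsj
    have ha : (0:ℕ) < m := by omega
    have hb : m - 1 < m := by omega
    have hab : (⟨0, ha⟩ : Fin m) ≠ ⟨m-1, hb⟩ := by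
      simp only [ne_eq, Fin.mk.injEq]; omega
    obtain ⟨e, hea, heb⟩ := exists_perm_aux (⟨0, ha⟩ : Fin m) ⟨m-1, hb⟩ i j hab (Ne.symm hj)
    have hesi : e.symm i = ⟨0, ha⟩ := by rw [← hea, Equiv.symm_apply_apply]
    have hesj : e.symm j = ⟨m-1, hb⟩ := by rw [← heb, Equiv.symm_apply_apply]
    set S : ℕ → Finset (Fin m) := fun k =>
      Finset.filter (fun x => ((e.symm x : Fin m) : ℕ) < k) Finset.univ with hS
    set σ : ℕ → ℕ := fun k => ∑ x ∈ S k, s x with hσ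
    have hcardS : ∀ k, k < m → (S k).card = k := by
      intro k hk
      have himg : S k = Finset.image e (Finset.filter (fun y : Fin m => (y:ℕ) < k) univ) := by
        ext x
        simp only [hS, mem_filter, mem_univ, true_and, Finset.mem_image]
        constructor
        · intro h; exact ⟨e.symm x, by simpa using h, by simp⟩
        · rintro ⟨y, hy, rfl⟩; simpa using hy
      rw [himg, Finset.card_image_of_injective _ e.injective]
      have hIio : Finset.filter (fun y : Fin m => (y : ℕ) < k) Finset.univ
          = Finset.Iio ⟨k, hk⟩ := by
        ext y; simp [Fin.lt_def]
      rw [hIio, Fin.card_Iio]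
    have hsub : ∀ k l, k ≤ l → S k ⊆ S l := by
      intro k l h x hx
      simp only [hS, mem_filter, mem_univ, true_and] at hx ⊢
      omega
    have hσmono : ∀ k l, k ≤ l → σ k ≤ σ l :=
      fun k l h => Finset.sum_le_sum_of_subset (hsub k l h)
    have hσle : ∀ k, σ k ≤ d := by
      intro k
      rw [← hdeg]
      exact Finset.sum_le_sum_of_subset (Finset.subset_univ _)
    have hcompl : ∀ k, ∑ x ∈ (S k)ᶜ, s x = d - σ k := by
      intro k
      have h1 := Finset.sum_add_sum_compl (S k) s
      rw [hdeg] at h1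
      have hrfl : σ k = ∑ x ∈ S k, s x := rfl
      rw [← hrfl] at h1
      omega
    have hmem_i : ∀ k, 1 ≤ k → i ∈ S k := by
      intro k hk
      simp only [hS, mem_filter, mem_univ, true_and, hesi]
      omega
    have hnot_j : ∀ k, k ≤ m - 1 → j ∉ S k := by
      intro k hk
      simp only [hS, mem_filter, mem_univ, true_and, hesj]
      omega
    have H : ∀ k, 1 ≤ k → k ≤ m - 1 → 2 * σ k < k ∨ 2 * (d - σ k) < m - k := by
      intro k h1 h2
      have hkm : k < m := by omega
      have hne : S k ≠ ∅ := by
        intro h; have hh := hmem_i k h1; rw [h] at hh; simp at hh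
      have hnu : S k ≠ Finset.univ := by
        intro h; exact hnot_j k h2 (h ▸ Finset.mem_univ j)
      have hc := hcond (S k) hne hnu
      rw [hcompl k, Finset.card_compl, Fintype.card_fin, hcardS k hkm] at hc
      have hrfl : σ k = ∑ x ∈ S k, s x := rfl
      rw [← hrfl] at hc
      omega
    have hAne : ((Finset.Icc 1 (m-1)).filter (fun k => 2 * σ k < k)).Nonempty := by
      refine ⟨m-1, ?_⟩
      simp only [Finset.mem_filter, Finset.mem_Icc]
      refine ⟨⟨by omega, le_rfl⟩, ?_⟩
      have h1 := H (m-1) (by omega) le_rfl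
      have hjc : s j ≤ d - σ (m-1) := by
        rw [← hcompl (m-1)]
        exact Finset.single_le_sum (fun _ _ => Nat.zero_le _)
          (Finset.mem_compl.mpr (hnot_j (m-1) le_rfl))
      have hsj1 : 1 ≤ s j := Nat.one_le_iff_ne_zero.mpr hsj
      omega
    obtain ⟨k, hkmem, hkmin⟩ := Finset.exists_min_image _ id hAne
    rw [Finset.mem_filter, Finset.mem_Icc] at hkmem
    obtain ⟨⟨hk1, hk2⟩, hk3⟩ := hkmem
    have hk1' : k ≠ 1 := by
      intro h
      have hsi1 : 1 ≤ s i := Nat.one_le_iff_ne_zero.mpr hi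
      have hsi2 : s i ≤ σ 1 :=
        Finset.single_le_sum (fun _ _ => Nat.zero_le _) (hmem_i 1 le_rfl)
      rw [h] at hk3
      omega
    have hprev : ¬ (2 * σ (k-1) < k - 1) := by
      intro h
      have hmem : k - 1 ∈ (Finset.Icc 1 (m-1)).filter (fun k => 2 * σ k < k) := by
        rw [Finset.mem_filter, Finset.mem_Icc]
        exact ⟨⟨by omega, by omega⟩, h⟩
      have := hkmin _ hmem
      simp only [id] at this
      omega
    have h2 := (H (k-1) (by omega) (by omega)).resolve_left hprev
    have hm1 := hσmono (k-1) k (by omega)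
    have hd2 := hσle k
    omega
  refine ⟨i, ?_⟩
  ext j
  rcases eq_or_ne j i with rfl | h
  · rw [Finsupp.single_eq_same, ← hdeg]
    rw [Finset.sum_eq_single j]
    · intro b _ hb; exact hkey b hb
    · intro hb; exact absurd (Finset.mem_univ j) hb
  · rw [Finsupp.single_eq_of_ne' (Ne.symm h)]
    exact hkey j h
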